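/- In the Random Priority mechanism, for every profile s of reported strict orderings, every agent i, and every ℓ ∈ {1,…,n}, the probability that agent i receives one of the first ℓ items of her own reported ordering is at least ℓ/n; that is, ∑_{t=1}^{ℓ} p_{i, s_i(t)}(s) ≥ ℓ/n, where s_i(t) is the t-th item in agent i's reported ordering. In particular, truth-telling is a safe strategy in Random Priority: the resulting allocation probability vector stochastically dominates the uniform vector (1/n, …, 1/n) with respect to the agent's true preferences. -/

import Mathlib

/-- A unit-sum valuation over `n` items. -/
def UnitSum {n : ℕ} (v : Fin n → ℝ) : Prop :=
  (∀ j, 0 ≤ v j) ∧ ∑ j, v j = 1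

/-- A unit-range valuation over `n` items. -/
def UnitRange {n : ℕ} (v : Fin n → ℝ) : Prop :=
  (∀ j, 0 ≤ v j ∧ v j ≤ 1) ∧ (∃ j, v j = 1) ∧ (∃ j, v j = 0)

/-- The optimal social welfare: the maximum over matchings (permutations of the
items) of the total utility. -/
noncomputable def SWopt {n : ℕ} (u : Fin n → Fin n → ℝ) : ℝ :=
  Finset.univ.sup' ⟨Equiv.refl (Fin n), Finset.mem_univ _⟩
    (fun μ : Equiv.Perm (Fin n) => ∑ i, u i (μ i))
open Classical in
/-- The list of items assigned by serial dictatorship in the first `r` positions: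
given reported orderings `s` (bijections from ranks to items, rank `0` most
preferred) and an ordering `π` of the agents (position `r` is served by agent
`π r`), the agent at each position receives her most preferred item among those
not yet assigned. -/
noncomputable def sdList {n : ℕ} (s : Fin n → (Fin n ≃ Fin n)) (π : Equiv.Perm (Fin n)) :
    ℕ → List (Fin n)
  | 0 => []
  | (r + 1) =>
      let prev := sdList s π r
      if h : r < n then
        let i := π ⟨r, h⟩
        let R : Finset (Fin n) := Finset.univ.filter (fun t => s i t ∉ prev)
        let itm : Fin n :=
          if hR : R.Nonempty then s i (R.min' hR)
          else ⟨0, Nat.lt_of_le_of_lt (Nat.zero_le r) h⟩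
        prev ++ [itm]
      else prev

/-- The item assigned to agent `i` by serial dictatorship with agent ordering `π`
and reported orderings `s`. -/
noncomputable def sdAssign {n : ℕ} (s : Fin n → (Fin n ≃ Fin n)) (π : Equiv.Perm (Fin n))
    (i : Fin n) : Fin n :=
  (sdList s π n).getD (π.symm i : ℕ) ⟨0, i.pos⟩

open Classical in
/-- `rpProb s i j` is the probability that agent `i` receives item `j` under the
Random Priority mechanism at report profile `s`: an ordering of the agents is
drawn uniformly at random and serial dictatorship is run with respect to it. -/
noncomputable def rpProb {n : ℕ} (s : Fin n → (Fin n ≃ Fin n)) (i j : Fin n) : ℝ :=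
  (∑ π : Equiv.Perm (Fin n), if sdAssign s π i = j then (1 : ℝ) else 0) / (n.factorial : ℝ)

/-- The expected social welfare of Random Priority at report profile `s` under
true valuation profile `u`. -/
noncomputable def rpSW {n : ℕ} (u : Fin n → Fin n → ℝ) (s : Fin n → (Fin n ≃ Fin n)) : ℝ :=
  ∑ i, ∑ j, rpProb s i j * u i j

/-- `s` is a pure Nash equilibrium of Random Priority at true valuation profile
`u`: no agent can strictly increase her expected utility by unilaterally
reporting a different ordering. -/
def RPNash {n : ℕ} (u : Fin n → Fin n → ℝ) (s : Fin n → (Fin n ≃ Fin n)) : Prop :=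
  ∀ (i : Fin n) (s' : Fin n ≃ Fin n),
    ∑ j, rpProb (Function.update s i s') i j * u i j ≤ ∑ j, rpProb s i j * u i j


section Aux

open Classical Finset

variable {n : ℕ} (s : Fin n → (Fin n ≃ Fin n)) (π : Equiv.Perm (Fin n))

lemma sdList_length : ∀ r, r ≤ n → (sdList s π r).length = r := by
  intro r
  induction r with
  | zero => intro _; simp [sdList]
  | succ r ih =>
    intro h
    have hr : r < n := h
    rw [sdList]
    simp only [dif_pos hr, List.length_append, List.length_singleton,
      ih (le_of_lt hr)]

lemma sdList_prefix : ∀ r m, r ≤ m → sdList s π r <+: sdList s π m := by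
  intro r m hm
  induction m with
  | zero =>
    have : r = 0 := Nat.le_zero.mp hm
    subst this; exact List.prefix_refl _
  | succ m ih =>
    rcases Nat.lt_or_ge r (m + 1) with h | h
    · refine (ih (Nat.lt_succ_iff.mp h)).trans ?_
      conv_rhs => rw [sdList]
      split
      · exact ⟨_, rfl⟩
      · exact List.prefix_refl _
    · have : r = m + 1 := le_antisymm hm h
      subst this; exact List.prefix_refl _

lemma sdAssign_top (i : Fin n) :
    ∃ t : Fin n, (t : ℕ) ≤ ((π.symm i : Fin n) : ℕ) ∧ sdAssign s π i = s i t := by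
  set r : ℕ := ((π.symm i : Fin n) : ℕ) with hrdef
  have h : r < n := (π.symm i).isLt
  have hπ : π ⟨r, h⟩ = i := by
    have : (⟨r, h⟩ : Fin n) = π.symm i := Fin.ext rfl
    rw [this, Equiv.apply_symm_apply]
  set prev := sdList s π r with hprev
  have hlen : prev.length = r := sdList_length s π r (le_of_lt h)
  set R : Finset (Fin n) :=
    Finset.univ.filter (fun t => s (π ⟨r, h⟩) t ∉ prev) with hRdef
  have hcard : ∀ (A : Finset (Fin n)), (∀ t ∈ A, s (π ⟨r, h⟩) t ∈ prev) →
      A.card ≤ r := by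
    intro A hA
    have hinj : Set.InjOn (s (π ⟨r, h⟩)) A := fun x _ y _ hxy =>
      (s (π ⟨r, h⟩)).injective hxy
    have hsub : A.image (s (π ⟨r, h⟩)) ⊆ prev.toFinset := by
      intro x hx
      rcases Finset.mem_image.mp hx with ⟨t, ht, rfl⟩
      exact List.mem_toFinset.mpr (hA t ht)
    calc A.card = (A.image (s (π ⟨r, h⟩))).card :=
          (Finset.card_image_of_injOn hinj).symm
      _ ≤ prev.toFinset.card := Finset.card_le_card hsub
      _ ≤ prev.length := List.toFinset_card_le _
      _ = r := hlen
  have hex : ∃ t ∈ R, t ≤ (⟨r, h⟩ : Fin n) := by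
    by_contra hc
    push_neg at hc
    have hsub : Finset.Iic (⟨r, h⟩ : Fin n) ⊆
        Finset.univ.filter (fun t => s (π ⟨r, h⟩) t ∈ prev) := by
      intro t ht
      have ht' := Finset.mem_Iic.mp ht
      rcases Classical.em (s (π ⟨r, h⟩) t ∈ prev) with hm | hm
      · exact Finset.mem_filter.mpr ⟨Finset.mem_univ _, hm⟩
      · exact absurd (hc t (Finset.mem_filter.mpr ⟨Finset.mem_univ _, hm⟩))
          (not_lt.mpr ht')
    have h3 : r + 1 ≤ r := by
      calc r + 1 = (Finset.Iic (⟨r, h⟩ : Fin n)).card := (Fin.card_Iic _).symm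
        _ ≤ (Finset.univ.filter (fun t => s (π ⟨r, h⟩) t ∈ prev)).card :=
            Finset.card_le_card hsub
        _ ≤ r := hcard _ (fun t ht => (Finset.mem_filter.mp ht).2)
    omega
  rcases hex with ⟨t₀, ht₀R, ht₀le⟩
  have hR : R.Nonempty := ⟨t₀, ht₀R⟩
  refine ⟨R.min' hR, ?_, ?_⟩
  · have : R.min' hR ≤ t₀ := Finset.min'_le _ _ ht₀R
    exact le_trans (Fin.le_def.mp this) (Fin.le_def.mp ht₀le)
  · -- compute sdAssign
    have hstep : sdList s π (r + 1) = prev ++ [s (π ⟨r, h⟩) (R.min' hR)] := by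
      rw [sdList]
      simp only [dif_pos h]
      rw [← hprev, ← hRdef, dif_pos hR]
    have hpre : sdList s π (r + 1) <+: sdList s π n :=
      sdList_prefix s π (r + 1) n h
    have hlen1 : (sdList s π (r + 1)).length = r + 1 :=
      sdList_length s π (r + 1) h
    have hlenn : (sdList s π n).length = n := sdList_length s π n le_rfl
    have hr1 : r < (sdList s π (r + 1)).length := by omega
    have hrn : r < (sdList s π n).length := by omega
    have hget : (sdList s π n)[r] = (sdList s π (r + 1))[r] :=
      (hpre.getElem hr1).symm
    have hval : (sdList s π (r + 1))[r]'hr1 = s (π ⟨r, h⟩) (R.min' hR) := by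
      simp only [hstep]
      rw [List.getElem_append_right (by omega)]
      simp [hlen]
    have : sdAssign s π i = (sdList s π n)[r] := by
      rw [sdAssign, ← hrdef, List.getD_eq_getElem _ _ hrn]
    rw [this, hget, hval, hπ]

lemma perm_fiber_card (i r : Fin n) :
    (Finset.univ.filter (fun π : Equiv.Perm (Fin n) => π i = r)).card =
    (Finset.univ.filter (fun π : Equiv.Perm (Fin n) => π i = i)).card := by
  refine Finset.card_nbij' (fun π => (Equiv.swap i r) * π)
    (fun π => (Equiv.swap i r) * π) ?_ ?_ ?_ ?_
  · intro π hπ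
    have := (Finset.mem_filter.mp hπ).2
    simp [Finset.mem_filter, Equiv.Perm.mul_apply, this]
  · intro π hπ
    have := (Finset.mem_filter.mp hπ).2
    simp [Finset.mem_filter, Equiv.Perm.mul_apply, this]
  · intro π _; simp [← mul_assoc]
  · intro π _; simp [← mul_assoc]

lemma perm_fiber_symm_card (i r : Fin n) :
    (Finset.univ.filter (fun π : Equiv.Perm (Fin n) => π.symm i = r)).card =
    (Finset.univ.filter (fun π : Equiv.Perm (Fin n) => π i = r)).card := by
  refine Finset.card_nbij' (fun π => π.symm) (fun π => π.symm) ?_ ?_ ?_ ?_ <;>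
    simp +contextual [Finset.mem_filter, Set.MapsTo, Set.LeftInvOn, Set.RightInvOn]

lemma perm_fiber_mul (i : Fin n) :
    n * (Finset.univ.filter (fun π : Equiv.Perm (Fin n) => π i = i)).card =
    n.factorial := by
  have h := Finset.card_eq_sum_card_fiberwise
    (f := fun π : Equiv.Perm (Fin n) => π i) (s := Finset.univ)
    (t := Finset.univ) (fun x _ => Finset.mem_univ _)
  have h2 : ∀ r : Fin n,
      (Finset.univ.filter (fun π : Equiv.Perm (Fin n) => π i = r)).card =
      (Finset.univ.filter (fun π : Equiv.Perm (Fin n) => π i = i)).card :=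
    fun r => perm_fiber_card i r
  rw [Finset.card_univ, Fintype.card_perm, Fintype.card_fin] at h
  rw [Finset.sum_congr rfl (fun r _ => h2 r), Finset.sum_const,
    Finset.card_univ, Fintype.card_fin, smul_eq_mul] at h
  omega

end Aux

/-- Random Priority has a safe strategy: for every report profile `s`, every
agent `i` and every `ℓ ∈ {1,…,n}`, the probability that agent `i` receives one
of the first `ℓ` items of her own reported ordering is at least `ℓ/n`; in
particular a truthful report yields an allocation that stochastically dominates
the uniform vector `(1/n, …, 1/n)`. -/
theorem rp_safe_strategy (n : ℕ) (s : Fin n → (Fin n ≃ Fin n)) (i : Fin n)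
    (ℓ : ℕ) (h1 : 1 ≤ ℓ) (h2 : ℓ ≤ n) :
    (ℓ : ℝ) / n ≤ ∑ t : Fin n, if (t : ℕ) < ℓ then rpProb s i (s i t) else 0 := by
  classical
  have hn : 0 < n := i.pos
  set c := (Finset.univ.filter (fun π : Equiv.Perm (Fin n) => π i = i)).card with hc
  have hcn : n * c = n.factorial := perm_fiber_mul i
  have hfac : 0 < n.factorial := Nat.factorial_pos n
  have hcpos : 0 < c := by
    rcases Nat.eq_zero_or_pos c with h0 | h0
    · rw [h0, Nat.mul_zero] at hcn; omega
    · exact h0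
  -- cardinality of the set of priority orders placing i among the first ℓ
  set G := Finset.univ.filter
    (fun π : Equiv.Perm (Fin n) => ((π.symm i : Fin n) : ℕ) < ℓ) with hGdef
  have hT : Finset.univ.filter (fun r : Fin n => (r : ℕ) < ℓ) =
      Finset.map (Fin.castLEEmb h2) Finset.univ := by
    ext r
    simp only [Finset.mem_filter, Finset.mem_univ, true_and, Finset.mem_map,
      Fin.castLEEmb, Function.Embedding.coeFn_mk]
    constructor
    · intro hr; exact ⟨⟨(r : ℕ), hr⟩, Fin.ext rfl⟩
    · rintro ⟨a, rfl⟩; exact a.isLt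
  have hTcard : (Finset.univ.filter (fun r : Fin n => (r : ℕ) < ℓ)).card = ℓ := by
    rw [hT, Finset.card_map, Finset.card_univ, Fintype.card_fin]
  have hGcard : G.card = ℓ * c := by
    have hfib := Finset.card_eq_sum_card_fiberwise
      (f := fun π : Equiv.Perm (Fin n) => π.symm i) (s := G)
      (t := Finset.univ.filter (fun r : Fin n => (r : ℕ) < ℓ))
      (fun π hπ => by
        simp only [hGdef, Finset.mem_coe, Finset.mem_filter, Finset.mem_univ, true_and] at hπ ⊢
        exact hπ)
    have heach : ∀ r ∈ Finset.univ.filter (fun r : Fin n => (r : ℕ) < ℓ),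
        (G.filter (fun π : Equiv.Perm (Fin n) => π.symm i = r)).card = c := by
      intro r hr
      have hrℓ : (r : ℕ) < ℓ := (Finset.mem_filter.mp hr).2
      have : G.filter (fun π : Equiv.Perm (Fin n) => π.symm i = r) =
          Finset.univ.filter (fun π : Equiv.Perm (Fin n) => π.symm i = r) := by
        ext π
        simp only [hGdef, Finset.filter_filter, Finset.mem_filter,
          Finset.mem_univ, true_and]
        constructor
        · exact fun h => h.2
        · intro h; exact ⟨by rw [h]; exact hrℓ, h⟩
      rw [this, perm_fiber_symm_card, perm_fiber_card]
    rw [hfib, Finset.sum_congr rfl heach, Finset.sum_const, hTcard, smul_eq_mul]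
  -- rewrite the sum
  have hsum : ∑ t : Fin n, (if (t : ℕ) < ℓ then rpProb s i (s i t) else 0) =
      (∑ π : Equiv.Perm (Fin n), ∑ t : Fin n,
        (if (t : ℕ) < ℓ then (if sdAssign s π i = s i t then (1 : ℝ) else 0)
          else 0)) / (n.factorial : ℝ) := by
    have hpt : ∀ t : Fin n, (if (t : ℕ) < ℓ then rpProb s i (s i t) else 0) =
        (∑ π : Equiv.Perm (Fin n), (if (t : ℕ) < ℓ then
          (if sdAssign s π i = s i t then (1 : ℝ) else 0) else 0)) /
          (n.factorial : ℝ) := by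
      intro t
      by_cases h : (t : ℕ) < ℓ
      · simp only [if_pos h, rpProb]
      · simp [if_neg h]
    rw [Finset.sum_congr rfl (fun t _ => hpt t), ← Finset.sum_div,
      Finset.sum_comm]
  have hlow : ∀ π : Equiv.Perm (Fin n),
      (if ((π.symm i : Fin n) : ℕ) < ℓ then (1 : ℝ) else 0) ≤
      ∑ t : Fin n, (if (t : ℕ) < ℓ then
        (if sdAssign s π i = s i t then (1 : ℝ) else 0) else 0) := by
    intro π
    have hnn : ∀ t ∈ (Finset.univ : Finset (Fin n)),
        (0:ℝ) ≤ (if (t : ℕ) < ℓ then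
          (if sdAssign s π i = s i t then (1 : ℝ) else 0) else 0) := by
      intro t _; split_ifs <;> norm_num
    split
    next hlt =>
      obtain ⟨t, htle, hta⟩ := sdAssign_top s π i
      have htl : (t : ℕ) < ℓ := lt_of_le_of_lt htle hlt
      have := Finset.single_le_sum hnn (Finset.mem_univ t)
      simpa [htl, hta] using this
    next => exact Finset.sum_nonneg hnn
  have hkey : (ℓ * c : ℝ) ≤ ∑ π : Equiv.Perm (Fin n), ∑ t : Fin n,
      (if (t : ℕ) < ℓ then (if sdAssign s π i = s i t then (1 : ℝ) else 0)
        else 0) := by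
    have h1 : (∑ π : Equiv.Perm (Fin n),
        (if ((π.symm i : Fin n) : ℕ) < ℓ then (1 : ℝ) else 0)) = (ℓ * c : ℝ) := by
      rw [Finset.sum_boole]
      exact_mod_cast hGcard
    rw [← h1]
    exact Finset.sum_le_sum (fun π _ => hlow π)
  rw [hsum]
  have hdiv : (ℓ : ℝ) / n = (ℓ * c : ℝ) / (n.factorial : ℝ) := by
    have : (n.factorial : ℝ) = (n : ℝ) * (c : ℝ) := by
      rw [← hcn]; push_cast; ring
    rw [this]
    rw [mul_div_mul_right _ _ (by exact_mod_cast hcpos.ne')]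
  rw [hdiv]
  exact div_le_div_of_nonneg_right hkey (by positivity)
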